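/- Let B be a skew-symmetric n×n integer matrix and let P be the permutation matrix of the simple transposition s_k = (k, k+1). Then P·𝔖(B)·Pᵀ − 𝔖(P·B·Pᵀ) = 2·B_{k,k+1}·(ε_{k,k+1} + ε_{k+1,k}). -/

import Mathlib

open Matrix

def upperV {n : ℕ} (B : Matrix (Fin n) (Fin n) ℤ) : Matrix (Fin n) (Fin n) ℤ :=
  Matrix.of fun i j => if i < j then B i j else if i = j then 1 else 0

def symS {n : ℕ} (B : Matrix (Fin n) (Fin n) ℤ) : Matrix (Fin n) (Fin n) ℤ :=
  upperV B + (upperV B)ᵀ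

set_option maxHeartbeats 2000000 in
theorem stmt_13 {n : ℕ} (B : Matrix (Fin n) (Fin n) ℤ) (hB : Bᵀ = -B)
    (k k' : Fin n) (hk : (k' : ℕ) = (k : ℕ) + 1) :
    letI σ : Equiv.Perm (Fin n) := Equiv.swap k k'
    letI P : Matrix (Fin n) (Fin n) ℤ := Matrix.of fun i j => if σ i = j then 1 else 0
    P * symS B * Pᵀ - symS (P * B * Pᵀ) =
      (2 * B k k') • (Matrix.single k k' (1 : ℤ) + Matrix.single k' k 1) := by
  set σ : Equiv.Perm (Fin n) := Equiv.swap k k' with hσdef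
  set P : Matrix (Fin n) (Fin n) ℤ := Matrix.of fun i j => if σ i = j then 1 else 0 with hPdef
  have hBs : ∀ i j : Fin n, B j i = -B i j := fun i j => by
    have := congrFun (congrFun hB i) j; simpa using this
  have hPA : ∀ (A : Matrix (Fin n) (Fin n) ℤ) (i j : Fin n),
      (P * A * Pᵀ) i j = A (σ i) (σ j) := by
    intro A i j
    simp [P, Matrix.mul_apply, Matrix.transpose_apply, ite_mul, mul_ite]
  have hσ : ∀ x : Fin n, σ x = if x = k then k' else if x = k' then k else x := by
    intro x; simp [σ, Equiv.swap_apply_def]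
  ext i j
  have h1 : (P * symS B * Pᵀ) i j = symS B (σ i) (σ j) := hPA _ i j
  simp only [Matrix.sub_apply, h1, Matrix.smul_apply, Matrix.add_apply, symS, upperV, transpose_apply, of_apply,
    Matrix.add_apply, hPA, Matrix.single, smul_eq_mul]
  rw [hσ i, hσ j]
  split_ifs <;>
    first
    | ring1
    | (rw [hBs]; ring1)
    | ((exfalso; clear hB hBs hPA h1 hσ hσdef hPdef P σ;
        simp only [Fin.lt_def, Fin.ext_iff, not_true] at *) <;> omega)
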